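/- Let R be a commutative Noetherian local ring with finite residue field, and let Φ: R → R be a ring automorphism. For each integer n > 0, let I_n be the ideal of R generated by the set {Φⁿ(x) − x : x ∈ R}. Then ⋂_{n>0} I_n = 0; equivalently, the canonical map R → lim_n R/I_n is injective. -/

import Mathlib

/-- If `M` is a finitely generated module over `A` and `A ⧸ I` is finite, then
`M ⧸ I • ⊤` is finite. -/
lemma aux_finite_quot_smul {A M : Type*} [CommRing A] [AddCommGroup M] [Module A M]
    (I : Ideal A) [Finite (A ⧸ I)] [Module.Finite A M] :
    Finite (M ⧸ (I • ⊤ : Submodule A M)) := by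
  obtain ⟨n, v, hv⟩ := Module.Finite.exists_fin (R := A) (M := M)
  set σ : A ⧸ I → A := Function.surjInv (Ideal.Quotient.mk_surjective (I := I)) with hσdef
  have hσ : ∀ d : A ⧸ I, Ideal.Quotient.mk I (σ d) = d :=
    Function.surjInv_eq _
  apply Finite.of_surjective
    (fun d : Fin n → A ⧸ I =>
      Submodule.Quotient.mk (p := (I • ⊤ : Submodule A M)) (∑ i, σ (d i) • v i))
  intro y
  obtain ⟨x, rfl⟩ := Submodule.Quotient.mk_surjective _ y
  have hx : x ∈ Submodule.span A (Set.range v) := hv ▸ Submodule.mem_top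
  obtain ⟨c, hc⟩ := Submodule.mem_span_range_iff_exists_fun A |>.mp hx
  refine ⟨fun i => Ideal.Quotient.mk I (c i), ?_⟩
  rw [Submodule.Quotient.eq]
  rw [← hc, ← Finset.sum_sub_distrib]
  refine Submodule.sum_mem _ fun i _ => ?_
  rw [← sub_smul]
  refine Submodule.smul_mem_smul ?_ Submodule.mem_top
  rw [← Ideal.Quotient.eq_zero_iff_mem, map_sub, hσ, sub_self]

/-- Quotients of a Noetherian local ring by powers of the maximal ideal are finite,
provided the residue field is finite. -/
lemma aux_finite_quot_pow_maximalIdeal (R : Type*) [CommRing R] [IsNoetherianRing R]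
    [IsLocalRing R] [Finite (IsLocalRing.ResidueField R)] (k : ℕ) :
    Finite (R ⧸ (IsLocalRing.maximalIdeal R ^ k)) := by
  induction k with
  | zero =>
      have : Subsingleton (R ⧸ (IsLocalRing.maximalIdeal R ^ 0)) := by
        rw [pow_zero, Ideal.one_eq_top]
        exact Ideal.Quotient.subsingleton_iff.mpr rfl
      exact Finite.of_subsingleton
  | succ k ih =>
      set m := IsLocalRing.maximalIdeal R
      set A := R ⧸ (m ^ (k + 1)) with hA
      set J : Ideal A := (m ^ k).map (Ideal.Quotient.mk (m ^ (k + 1))) with hJ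
      have hle : m ^ (k + 1) ≤ m ^ k := Ideal.pow_le_pow_right k.le_succ
      have hle1 : m ^ (k + 1) ≤ m := by
        simpa using Ideal.pow_le_pow_right (I := m) (Nat.one_le_iff_ne_zero.mpr k.succ_ne_zero)
      haveI : Finite (A ⧸ J) :=
        Finite.of_equiv _ (DoubleQuot.quotQuotEquivQuotOfLE hle).symm.toEquiv
      haveI : Finite (A ⧸ (m.map (Ideal.Quotient.mk (m ^ (k + 1))))) :=
        Finite.of_equiv (IsLocalRing.ResidueField R)
          (DoubleQuot.quotQuotEquivQuotOfLE hle1).symm.toEquiv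
      haveI : Module.Finite A J :=
        Module.Finite.iff_fg.mpr (IsNoetherian.noetherian J)
      have hsmul : ((m.map (Ideal.Quotient.mk (m ^ (k + 1)))) • ⊤ : Submodule A J) = ⊥ := by
        rw [eq_bot_iff]
        rw [Submodule.smul_le]
        intro r hr x _
        rw [Submodule.mem_bot]
        ext
        show r * (x : A) = 0
        have hmem : r * (x : A) ∈ (m * m ^ k).map (Ideal.Quotient.mk (m ^ (k + 1))) := by
          rw [Ideal.map_mul]
          exact Ideal.mul_mem_mul hr x.2
        rw [← pow_succ'] at hmem
        rw [Ideal.map_quotient_self] at hmem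
        exact (Submodule.mem_bot A).mp hmem
      haveI : Finite J := by
        have h1 : Finite (J ⧸ ((m.map (Ideal.Quotient.mk (m ^ (k + 1)))) • ⊤ :
            Submodule A J)) := aux_finite_quot_smul _
        exact Finite.of_equiv _ (Submodule.quotEquivOfEqBot _ hsmul).toEquiv
      exact Finite.of_ideal_quotient J

theorem iInf_coinvariance_ideals_eq_bot
    {R : Type*} [CommRing R] [IsNoetherianRing R] [IsLocalRing R]
    [Finite (IsLocalRing.ResidueField R)] (Φ : R ≃+* R) :
    ⨅ (n : ℕ) (_ : 0 < n),
      Ideal.span (Set.range fun x : R => (Φ ^ n) x - x) = ⊥ := by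
  set m := IsLocalRing.maximalIdeal R with hm
  -- the image of the maximal ideal under any ring automorphism is itself
  have hmap : ∀ (Ψ : R ≃+* R), Ideal.map (Ψ : R →+* R) m = m := by
    intro Ψ
    have hsub : ∀ (Ψ : R ≃+* R), ∀ x ∈ m, Ψ x ∈ m := by
      intro Ψ x hx
      rw [hm, IsLocalRing.mem_maximalIdeal, mem_nonunits_iff] at hx ⊢
      intro h
      have := h.map Ψ.symm.toRingHom
      simp at this
      exact hx this
    apply le_antisymm
    · rw [Ideal.map_le_iff_le_comap]
      intro x hx
      exact hsub Ψ x hx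
    · intro x hx
      have : x = Ψ (Ψ.symm x) := (Ψ.apply_symm_apply x).symm
      rw [this]
      exact Ideal.mem_map_of_mem _ (hsub Ψ.symm x hx)
  have key : ∀ k : ℕ, ∃ n : ℕ, 0 < n ∧
      Ideal.span (Set.range fun x : R => (Φ ^ n) x - x) ≤ m ^ k := by
    intro k
    haveI : Finite (R ⧸ m ^ k) := aux_finite_quot_pow_maximalIdeal R k
    have hmapk : (m ^ k).map (Φ : R →+* R) = m ^ k := by
      rw [Ideal.map_pow, hmap Φ]
    let e : (R ⧸ m ^ k) ≃+* (R ⧸ m ^ k) := Ideal.quotientEquiv _ _ Φ hmapk.symm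
    have hcompat : ∀ (j : ℕ) (x : R),
        (e ^ j) (Ideal.Quotient.mk (m ^ k) x) = Ideal.Quotient.mk (m ^ k) ((Φ ^ j) x) := by
      intro j
      induction j with
      | zero => intro x; rfl
      | succ j ih =>
          intro x
          have h1 : (e ^ (j + 1)) (Ideal.Quotient.mk (m ^ k) x)
              = (e ^ j) (e (Ideal.Quotient.mk (m ^ k) x)) := by
            rw [pow_succ]; rfl
          have h2 : ((Φ ^ (j + 1)) x) = (Φ ^ j) (Φ x) := by
            rw [pow_succ]; rfl
          rw [h1, h2]
          rw [show e (Ideal.Quotient.mk (m ^ k) x) = Ideal.Quotient.mk (m ^ k) (Φ x) from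
            Ideal.quotientEquiv_mk _ _ _ _ x]
          exact ih (Φ x)
    haveI : Finite (RingAut (R ⧸ m ^ k)) :=
      Finite.of_injective (fun f => ⇑f) DFunLike.coe_injective
    obtain ⟨n, hn, hpow⟩ := (isOfFinOrder_of_finite e).exists_pow_eq_one
    refine ⟨n, hn, ?_⟩
    rw [Ideal.span_le]
    rintro _ ⟨x, rfl⟩
    have := hcompat n x
    rw [hpow] at this
    have hx : Ideal.Quotient.mk (m ^ k) ((Φ ^ n) x) = Ideal.Quotient.mk (m ^ k) x := this.symm
    exact Ideal.Quotient.eq.mp hx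
  refine le_antisymm ?_ bot_le
  have hbot : (⨅ i : ℕ, m ^ i) = ⊥ :=
    Ideal.iInf_pow_eq_bot_of_isLocalRing m
      (Ideal.IsMaximal.ne_top (IsLocalRing.maximalIdeal.isMaximal R))
  rw [← hbot]
  refine le_iInf fun k => ?_
  obtain ⟨n, hn, hle⟩ := key k
  exact le_trans (iInf₂_le n hn) hle
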